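/- Let λ, μ : ℕ → ℝ with μ(n) ≠ 0 for all n ≥ 2 and λ(n)/μ(n) → 0 as n → ∞. Set f(n) = λ(n) + μ(n) and g(n) = −λ(n−1)μ(n), and let a : ℕ → ℝ satisfy a_{n+1} = f(n)a_n + g(n)a_{n−1} for all n ≥ 2, with b₁ := a₂ − λ(1)a₁ ≠ 0. Define r(n) = b₁·∏_{i=2}^{n} μ(i). Then the sequence (log₁₀ |a_n|) is equidistributed mod 1 if and only if the sequence (log₁₀ |r(n)|) is equidistributed mod 1; that is, (a_n) is Benford base 10 if and only if the main term (r(n)) is Benford base 10. -/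

import Mathlib

open Filter Finset Classical

/-- A sequence `x : ℕ → ℝ` is equidistributed mod 1 if for all `0 ≤ u ≤ v ≤ 1`,
the proportion of `n < N` with `Int.fract (x n) ∈ [u, v)` tends to `v - u`. -/
def EquidistributedMod1 (x : ℕ → ℝ) : Prop :=
  ∀ u v : ℝ, 0 ≤ u → u ≤ v → v ≤ 1 →
    Tendsto (fun N : ℕ =>
        (((Finset.range N).filter (fun n => Int.fract (x n) ∈ Set.Ico u v)).card : ℝ) / (N : ℝ))
      atTop (nhds (v - u))

set_option maxHeartbeats 1000000
lemma card_filter_succ (Q : ℕ → Prop) [DecidablePred Q] (N : ℕ) :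
    ((range N).filter (fun n => Q (n+1))).card + (if Q 0 then 1 else 0)
      = ((range (N+1)).filter Q).card := by
  induction N with
  | zero => rw [range_one]; simp [filter_singleton]; split_ifs <;> simp
  | succ N ih =>
    rw [range_add_one, filter_insert, show N+1+1 = (N+1)+1 from rfl,
      range_add_one (n := N+1), filter_insert]
    by_cases h : Q (N+1)
    · rw [if_pos h, if_pos h, card_insert_of_notMem (by simp),
        card_insert_of_notMem (by simp)]
      omega
    · rw [if_neg h, if_neg h, ih]

lemma div_mul_div_cancel_mid (a b c : ℝ) (hb : b ≠ 0) : a / b * (b / c) = a / c := by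
  field_simp

lemma tendsto_shift_div {c : ℕ → ℕ} {L : ℝ}
    (h : Tendsto (fun N : ℕ => (c N : ℝ)/N) atTop (nhds L)) :
    Tendsto (fun N : ℕ => (c (N+1) : ℝ)/N) atTop (nhds L) := by
  have h1 : Tendsto (fun N : ℕ => (c (N+1) : ℝ)/((N+1:ℕ):ℝ)) atTop (nhds L) :=
    h.comp (tendsto_add_atTop_nat 1)
  have h2 : Tendsto (fun N : ℕ => (((N+1:ℕ)):ℝ)/N) atTop (nhds 1) := by
    have := tendsto_const_nhds.add tendsto_one_div_atTop_nhds_zero_nat (a := (1:ℝ))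
    rw [add_zero] at this
    refine this.congr' ?_
    filter_upwards [eventually_ge_atTop 1] with N hN
    have hN' : (N:ℝ) ≠ 0 := Nat.cast_ne_zero.mpr (by omega)
    push_cast
    field_simp
  have h3 := h1.mul h2
  rw [mul_one] at h3
  refine h3.congr fun N => ?_
  exact div_mul_div_cancel_mid _ _ _ (Nat.cast_ne_zero.mpr (by omega))

lemma tendsto_pred_div {c : ℕ → ℕ} {L : ℝ}
    (h : Tendsto (fun N : ℕ => (c N : ℝ)/N) atTop (nhds L)) :
    Tendsto (fun N : ℕ => (c (N-1) : ℝ)/N) atTop (nhds L) := by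
  have h1 : Tendsto (fun N : ℕ => (c (N-1) : ℝ)/((N-1 : ℕ) : ℝ)) atTop (nhds L) :=
    h.comp (tendsto_sub_atTop_nat 1)
  have h2 : Tendsto (fun N : ℕ => (((N-1:ℕ)):ℝ)/N) atTop (nhds 1) := by
    have := tendsto_const_nhds.sub tendsto_one_div_atTop_nhds_zero_nat (a := (1:ℝ))
    rw [sub_zero] at this
    refine this.congr' ?_
    filter_upwards [eventually_ge_atTop 1] with N hN
    have hN' : (N:ℝ) ≠ 0 := Nat.cast_ne_zero.mpr (by omega)
    rw [Nat.cast_sub hN, Nat.cast_one]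
    field_simp
  have h3 := h1.mul h2
  rw [mul_one] at h3
  refine h3.congr' ?_
  filter_upwards [eventually_ge_atTop 2] with N hN
  exact div_mul_div_cancel_mid _ _ _ (Nat.cast_ne_zero.mpr (by omega))

lemma tendsto_const_div_atTop (C : ℝ) :
    Tendsto (fun N : ℕ => C / N) atTop (nhds 0) := by
  have := tendsto_one_div_atTop_nhds_zero_nat.const_mul C
  rw [mul_zero] at this
  refine this.congr fun N => ?_
  rw [mul_one_div]

lemma equi_shift_iff (x : ℕ → ℝ) :
    EquidistributedMod1 x ↔ EquidistributedMod1 (fun n => x (n+1)) := by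
  constructor
  · intro hx u v hu huv hv
    have hc := hx u v hu huv hv
    have key := fun N => card_filter_succ (fun n => Int.fract (x n) ∈ Set.Ico u v) N
    have h1 := tendsto_shift_div hc
    have h0 := tendsto_const_div_atTop (if Int.fract (x 0) ∈ Set.Ico u v then (1:ℝ) else 0)
    have h3 := h1.sub h0
    rw [sub_zero] at h3
    refine h3.congr fun N => ?_
    rw [div_sub_div_same]
    congr 1
    rw [← key N]
    push_cast
    split_ifs <;> ring
  · intro hx u v hu huv hv
    have hc := hx u v hu huv hv
    simp only at hc
    have key := fun N => card_filter_succ (fun n => Int.fract (x n) ∈ Set.Ico u v) N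
    have h1 := tendsto_pred_div hc
    have h0 := tendsto_const_div_atTop (if Int.fract (x 0) ∈ Set.Ico u v then (1:ℝ) else 0)
    have h3 := h1.add h0
    rw [add_zero] at h3
    refine h3.congr' ?_
    filter_upwards [eventually_ge_atTop 1] with N hN
    rw [← add_div]
    congr 1
    have := key (N-1)
    rw [Nat.sub_add_cancel hN] at this
    rw [← this]
    push_cast
    split_ifs <;> ring

lemma fract_close_upper {u v δ a s : ℝ} (hu : 0 ≤ u) (hv : v ≤ 1) (hδ0 : 0 < δ) (hδ1 : δ ≤ 1)
    (hs : |s| < δ) (ha : Int.fract a ∈ Set.Ico u v) :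
    Int.fract (a + s) ∈ Set.Ico (max (u-δ) 0) (min (v+δ) 1) ∪
      Set.Ico (0:ℝ) δ ∪ Set.Ico (1-δ) 1 := by
  obtain ⟨h1, h2⟩ := ha
  obtain ⟨hs1, hs2⟩ := abs_lt.mp hs
  have hfr : 0 ≤ Int.fract a := Int.fract_nonneg a
  have hfr2 : Int.fract a < 1 := Int.fract_lt_one a
  have hw : Int.fract (a + s) = Int.fract (Int.fract a + s) := by
    conv_lhs => rw [← Int.floor_add_fract a]
    rw [add_assoc, Int.fract_intCast_add]
  set w := Int.fract a + s with hwdef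
  have hfd : Int.fract w = w - ⌊w⌋ := rfl
  rcases lt_or_ge w 0 with hneg | hpos
  · right
    have hfl : ⌊w⌋ = -1 := by
      rw [Int.floor_eq_iff]; push_cast; constructor <;> linarith
    rw [hw, hfd, hfl]
    push_cast
    constructor <;> linarith
  · rcases lt_or_ge w 1 with hlt | hge
    · left; left
      rw [hw, Int.fract_eq_self.mpr ⟨hpos, hlt⟩]
      exact ⟨max_le (by linarith) hpos, lt_min_iff.mpr ⟨by linarith, hlt⟩⟩
    · left; right
      have hfl : ⌊w⌋ = 1 := by
        rw [Int.floor_eq_iff]; push_cast; constructor <;> linarith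
      rw [hw, hfd, hfl]
      push_cast
      constructor <;> linarith

lemma fract_close_lower {u v δ a s : ℝ} (hu : 0 ≤ u) (hv : v ≤ 1) (hδ0 : 0 < δ)
    (hs : |s| < δ) (ha : Int.fract a ∈ Set.Ico (u+δ) (v-δ)) :
    Int.fract (a + s) ∈ Set.Ico u v := by
  obtain ⟨h1, h2⟩ := ha
  obtain ⟨hs1, hs2⟩ := abs_lt.mp hs
  have hw : Int.fract (a + s) = Int.fract (Int.fract a + s) := by
    conv_lhs => rw [← Int.floor_add_fract a]
    rw [add_assoc, Int.fract_intCast_add]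
  rw [hw, Int.fract_eq_self.mpr ⟨by linarith, by linarith⟩]
  constructor <;> linarith

lemma equi_of_tendsto_sub {x y : ℕ → ℝ}
    (hd : Tendsto (fun n => x n - y n) atTop (nhds 0))
    (hy : EquidistributedMod1 y) : EquidistributedMod1 x := by
  intro u v hu huv hv
  rw [Metric.tendsto_atTop]
  intro ε hε
  set δ := min (ε/9) (1/2) with hδdef
  have hδ0 : 0 < δ := lt_min (by linarith) (by norm_num)
  have hδh : δ ≤ 1/2 := min_le_right _ _
  have hδε : δ ≤ ε/9 := min_le_left _ _
  have hδ1 : δ ≤ 1 := by linarith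
  obtain ⟨N₀, hN₀⟩ := Metric.tendsto_atTop.mp hd δ hδ0
  set u' := max (u-δ) 0 with hu'def
  set v' := min (v+δ) 1 with hv'def
  have hu'le : u' ≤ v' := le_trans (max_le (by linarith) hu)
    (le_trans huv (le_min (by linarith) hv))
  have h1 := hy u' v' (le_max_right _ _) hu'le (min_le_right _ _)
  have h2 := hy 0 δ le_rfl hδ0.le (by linarith)
  have h3 := hy (1-δ) 1 (by linarith) (by linarith) le_rfl
  set p := min (u+δ) 1 with hpdef
  set q := max (v-δ) p with hqdef
  have h0 := hy p q (le_min (by linarith) (by norm_num)) (le_max_right _ _)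
    (max_le (by linarith) (min_le_right _ _))
  obtain ⟨M1, hM1⟩ := Metric.tendsto_atTop.mp h1 δ hδ0
  obtain ⟨M2, hM2⟩ := Metric.tendsto_atTop.mp h2 δ hδ0
  obtain ⟨M3, hM3⟩ := Metric.tendsto_atTop.mp h3 δ hδ0
  obtain ⟨M0, hM0⟩ := Metric.tendsto_atTop.mp h0 δ hδ0
  obtain ⟨M4, hM4⟩ := Metric.tendsto_atTop.mp (tendsto_const_div_atTop (N₀:ℝ)) δ hδ0
  refine ⟨max (max (max M1 M2) (max M3 M0)) (max M4 1), fun N hN => ?_⟩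
  have hNM1 : M1 ≤ N := by omega
  have hNM2 : M2 ≤ N := by omega
  have hNM3 : M3 ≤ N := by omega
  have hNM0 : M0 ≤ N := by omega
  have hNM4 : M4 ≤ N := by omega
  have hN1 : 1 ≤ N := by omega
  have hNpos : (0:ℝ) < N := by exact_mod_cast hN1
  -- counts
  set cX := ((range N).filter (fun n => Int.fract (x n) ∈ Set.Ico u v)).card with hcX
  set c1 := ((range N).filter (fun n => Int.fract (y n) ∈ Set.Ico u' v')).card with hc1
  set c2 := ((range N).filter (fun n => Int.fract (y n) ∈ Set.Ico (0:ℝ) δ)).card with hc2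
  set c3 := ((range N).filter (fun n => Int.fract (y n) ∈ Set.Ico (1-δ) 1)).card with hc3
  set c0 := ((range N).filter (fun n => Int.fract (y n) ∈ Set.Ico p q)).card with hc0
  -- bounds from equidistribution of y
  have b1 : (c1:ℝ)/N < (v'-u') + δ := by
    have := hM1 N hNM1; rw [Real.dist_eq, abs_sub_lt_iff] at this; linarith [this.1]
  have b2 : (c2:ℝ)/N < 2*δ := by
    have := hM2 N hNM2; rw [Real.dist_eq, abs_sub_lt_iff] at this; linarith [this.1]
  have b3 : (c3:ℝ)/N < 2*δ := by
    have := hM3 N hNM3; rw [Real.dist_eq, abs_sub_lt_iff] at this; linarith [this.1]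
  have b0 : (q-p) - δ < (c0:ℝ)/N := by
    have := hM0 N hNM0; rw [Real.dist_eq, abs_sub_lt_iff] at this; linarith [this.2]
  have b4 : (N₀:ℝ)/N < δ := by
    have := hM4 N hNM4; rw [Real.dist_eq, sub_zero] at this
    calc (N₀:ℝ)/N ≤ |(N₀:ℝ)/N| := le_abs_self _
    _ < δ := this
  have hv'u' : v' - u' ≤ v - u + 2*δ := by
    have : u - δ ≤ u' := le_max_left _ _
    have : v' ≤ v + δ := min_le_left _ _
    simp only [hu'def, hv'def]
    have h5 : u - δ ≤ max (u-δ) 0 := le_max_left _ _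
    have h6 : min (v+δ) 1 ≤ v + δ := min_le_left _ _
    linarith
  -- upper bound subset
  have hsub1 : (range N).filter (fun n => Int.fract (x n) ∈ Set.Ico u v) ⊆
      range N₀ ∪ ((range N).filter (fun n => Int.fract (y n) ∈ Set.Ico u' v') ∪
        ((range N).filter (fun n => Int.fract (y n) ∈ Set.Ico (0:ℝ) δ) ∪
         (range N).filter (fun n => Int.fract (y n) ∈ Set.Ico (1-δ) 1))) := by
    intro n hn
    rw [mem_filter] at hn
    obtain ⟨hnN, hP⟩ := hn
    rcases lt_or_ge n N₀ with h | h
    · exact mem_union_left _ (mem_range.mpr h)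
    · have hcl := hN₀ n h
      rw [Real.dist_eq, sub_zero] at hcl
      have hcl' : |y n - x n| < δ := by rw [abs_sub_comm]; exact hcl
      have hmem := fract_close_upper hu hv hδ0 hδ1 hcl' hP
      rw [show x n + (y n - x n) = y n by ring] at hmem
      simp only [Set.mem_union] at hmem
      rcases hmem with (h' | h') | h'
      · exact mem_union_right _ (mem_union_left _ (mem_filter.mpr ⟨hnN, h'⟩))
      · exact mem_union_right _ (mem_union_right _ (mem_union_left _ (mem_filter.mpr ⟨hnN, h'⟩)))
      · exact mem_union_right _ (mem_union_right _ (mem_union_right _ (mem_filter.mpr ⟨hnN, h'⟩)))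
  have hcard1 : cX ≤ N₀ + (c1 + (c2 + c3)) := by
    refine le_trans (card_le_card hsub1) ?_
    refine le_trans (card_union_le _ _) ?_
    refine add_le_add (le_of_eq (card_range N₀)) ?_
    refine le_trans (card_union_le _ _) (add_le_add le_rfl (card_union_le _ _))
  have hupper : (cX:ℝ)/N < v - u + 8*δ := by
    have hcast : (cX:ℝ)/N ≤ ((N₀:ℝ) + (c1 + (c2 + c3)))/N :=
      (div_le_div_iff_of_pos_right hNpos).mpr (by exact_mod_cast hcard1)
    rw [add_div, add_div, add_div] at hcast
    linarith
  have hlow : v - u - (cX:ℝ)/N < ε := by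
    rcases le_or_gt (v-u) (3*δ) with hdeg | hndeg
    · have : (0:ℝ) ≤ (cX:ℝ)/N := by positivity
      linarith
    · -- nondegenerate: p = u+δ, q = v-δ
      have hp1 : u + δ ≤ 1 := by
        have h6 : min (v+δ) 1 ≤ 1 := min_le_right _ _
        linarith
      have hpe : p = u + δ := min_eq_left hp1
      have hqe : q = v - δ := by
        rw [hqdef, hpe]; exact max_eq_left (by linarith)
      have hsub0 : (range N).filter (fun n => Int.fract (y n) ∈ Set.Ico p q) ⊆
          range N₀ ∪ (range N).filter (fun n => Int.fract (x n) ∈ Set.Ico u v) := by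
        intro n hn
        rw [mem_filter] at hn
        obtain ⟨hnN, hP⟩ := hn
        rcases lt_or_ge n N₀ with h | h
        · exact mem_union_left _ (mem_range.mpr h)
        · have hcl := hN₀ n h
          rw [Real.dist_eq, sub_zero] at hcl
          rw [hpe, hqe] at hP
          have hmem := fract_close_lower hu hv hδ0 hcl hP
          rw [show y n + (x n - y n) = x n by ring] at hmem
          exact mem_union_right _ (mem_filter.mpr ⟨hnN, hmem⟩)
      have hcard0 : c0 ≤ N₀ + cX := by
        refine le_trans (card_le_card hsub0) ?_
        refine le_trans (card_union_le _ _) (add_le_add (le_of_eq (card_range N₀)) le_rfl)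
      have hcast : (c0:ℝ)/N ≤ ((N₀:ℝ) + cX)/N :=
        (div_le_div_iff_of_pos_right hNpos).mpr (by exact_mod_cast hcard0)
      rw [add_div] at hcast
      rw [hpe, hqe] at b0
      linarith
  rw [Real.dist_eq, abs_sub_lt_iff]
  constructor
  · linarith
  · linarith

/-- For the recurrence `a (n+1) = f(n) a n + g(n) a (n-1)` with `f = λ + μ`,
`g(n) = -λ(n-1)μ(n)`, `μ` nonvanishing, `λ(n)/μ(n) → 0` and `b₁ = a₂ - λ(1)a₁ ≠ 0`:
`(a n)` is Benford base 10 iff the main term `r n = b₁ ∏_{i=2}^n μ(i)` is Benford base 10. -/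
theorem benford_iff_main_term_benford (l μ : ℕ → ℝ)
    (hμ : ∀ n : ℕ, 2 ≤ n → μ n ≠ 0)
    (hp : Tendsto (fun n : ℕ => l n / μ n) atTop (nhds 0))
    (f g : ℕ → ℝ) (hf : ∀ n, f n = l n + μ n)
    (hg : ∀ n : ℕ, 2 ≤ n → g n = -(l (n - 1) * μ n))
    (a : ℕ → ℝ)
    (hrec : ∀ n : ℕ, 2 ≤ n → a (n + 1) = f n * a n + g n * a (n - 1))
    (hb : a 2 - l 1 * a 1 ≠ 0)
    (r : ℕ → ℝ) (hr : ∀ n : ℕ, r n = (a 2 - l 1 * a 1) * ∏ i ∈ Finset.Icc 2 n, μ i) :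
    EquidistributedMod1 (fun n => Real.logb 10 |a n|) ↔
      EquidistributedMod1 (fun n => Real.logb 10 |r n|) := by
  have hrstep : ∀ m : ℕ, 1 ≤ m → r (m+1) = μ (m+1) * r m := by
    intro m hm
    rw [hr, hr, Finset.prod_Icc_succ_top (by omega : 2 ≤ m+1)]
    ring
  have hrne : ∀ n, r n ≠ 0 := by
    intro n
    rw [hr]
    refine mul_ne_zero hb (Finset.prod_ne_zero_iff.mpr ?_)
    intro i hi
    exact hμ i (mem_Icc.mp hi).1
  have key : ∀ n, 1 ≤ n → a (n+1) = l n * a n + r n := by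
    intro n
    induction n with
    | zero => intro h; exact absurd h (by norm_num)
    | succ m ih =>
      intro _
      rcases Nat.eq_zero_or_pos m with rfl | hm
      · rw [hr, show Finset.Icc 2 1 = ∅ from Finset.Icc_eq_empty (by omega), prod_empty]
        ring
      · have hrec' := hrec (m+1) (by omega)
        rw [hf, hg _ (by omega)] at hrec'
        simp only [Nat.add_sub_cancel] at hrec'
        have ihm := ih hm
        rw [hrstep m hm, hrec']
        have hrm : r m = a (m+1) - l m * a m := by linarith
        rw [hrm]; ring
  set c : ℕ → ℝ := fun n => l n * a n / r n with hcdef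
  have hcrec : ∀ n, 1 ≤ n → c (n+1) = (l (n+1)/μ (n+1)) * (1 + c n) := by
    intro n hn
    have h1 := key n hn
    have h2 := hrstep n hn
    have hrn := hrne n
    have hμn : μ (n+1) ≠ 0 := hμ _ (by omega)
    simp only [hcdef]
    rw [h1, h2, one_add_div hrn, div_mul_div_comm, add_comm (r n)]
  obtain ⟨N₁', hN₁'⟩ := Metric.tendsto_atTop.mp hp (1/2) (by norm_num)
  set N₁ := max N₁' 1 with hN₁def
  have hN₁ : ∀ m, N₁ ≤ m → |l m / μ m| ≤ 1/2 := by
    intro m hm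
    have h := hN₁' m (le_trans (le_max_left _ _) hm)
    rw [Real.dist_eq, sub_zero] at h
    linarith
  set B := max |c N₁| 1 with hBdef
  have hB1 : (1:ℝ) ≤ B := le_max_right _ _
  have hbound : ∀ n, N₁ ≤ n → |c n| ≤ B := by
    intro n hn
    induction n, hn using Nat.le_induction with
    | base => exact le_max_left _ _
    | succ n hn ih =>
      rw [hcrec n (le_trans (le_max_right _ _) hn), abs_mul]
      have h5 : |1 + c n| ≤ 1 + B := by
        refine le_trans (abs_add_le _ _) ?_
        simp only [abs_one]
        linarith
      have h6 := hN₁ (n+1) (by omega)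
      calc |l (n+1)/μ (n+1)| * |1 + c n| ≤ (1/2) * (1+B) :=
            mul_le_mul h6 h5 (abs_nonneg _) (by norm_num)
        _ ≤ B := by linarith
  have hctend : Tendsto c atTop (nhds 0) := by
    apply squeeze_zero_norm' (a := fun n => (1+B) * |l n / μ n|)
    · filter_upwards [eventually_ge_atTop (N₁+1)] with n hn
      obtain ⟨m, rfl⟩ : ∃ m, n = m + 1 := ⟨n-1, by omega⟩
      rw [hcrec m (by omega), Real.norm_eq_abs, abs_mul]
      have h5 : |1 + c m| ≤ 1 + B := by
        refine le_trans (abs_add_le _ _) ?_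
        simp only [abs_one]
        linarith [hbound m (by omega)]
      calc |l (m+1)/μ (m+1)| * |1 + c m| ≤ |l (m+1)/μ (m+1)| * (1+B) :=
            mul_le_mul_of_nonneg_left h5 (abs_nonneg _)
        _ = (1+B) * |l (m+1)/μ (m+1)| := mul_comm _ _
    · have h7 := hp.abs
      rw [abs_zero] at h7
      have h8 := h7.const_mul (1+B)
      rw [mul_zero] at h8
      exact h8
  have hone : Tendsto (fun n => |1 + c n|) atTop (nhds 1) := by
    have h9 := ((tendsto_const_nhds (x := (1:ℝ))).add hctend).abs
    simpa using h9
  have hlogb : Tendsto (fun n => Real.logb 10 |1 + c n|) atTop (nhds 0) := by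
    have hcont : ContinuousAt (Real.logb 10) 1 := Real.continuousAt_logb (by norm_num)
    have h10 := hcont.tendsto.comp hone
    rw [show Real.logb 10 1 = 0 from Real.logb_one] at h10
    exact h10
  obtain ⟨N₂, hN₂⟩ := Metric.tendsto_atTop.mp hctend (1/2) (by norm_num)
  have hd : Tendsto (fun n => Real.logb 10 |a (n+1)| - Real.logb 10 |r n|) atTop (nhds 0) := by
    refine hlogb.congr' ?_
    filter_upwards [eventually_ge_atTop (max N₂ 1)] with n hn
    have hcsm : |c n| < 1/2 := by
      have := hN₂ n (le_trans (le_max_left _ _) hn)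
      rwa [Real.dist_eq, sub_zero] at this
    have h1c : (1:ℝ) + c n ≠ 0 := by
      rcases abs_lt.mp hcsm with ⟨ha1, ha2⟩
      intro hcon; rw [add_eq_zero_iff_eq_neg] at hcon; rw [hcon] at ha1; linarith
    have hrn := hrne n
    have ha : a (n+1) = (1 + c n) * r n := by
      have h1 := key n (le_trans (le_max_right _ _) hn)
      have : c n * r n = l n * a n := by
        simp only [hcdef]; field_simp
      rw [h1, ← this]; ring
    rw [ha, abs_mul, Real.logb_mul (abs_ne_zero.mpr h1c) (abs_ne_zero.mpr hrn)]
    ring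
  rw [equi_shift_iff (fun n => Real.logb 10 |a n|)]
  constructor
  · intro h
    have hd2 := hd.neg
    rw [neg_zero] at hd2
    simp only [neg_sub] at hd2
    exact equi_of_tendsto_sub hd2 h
  · intro h
    exact equi_of_tendsto_sub hd h
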